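/- Under the same hypotheses (Winfree model solution with dispersion bounded by D on [0,t*]), each pairwise difference satisfies |d/dt δ_{i,j}(t)| ≤ 2γ + Cκ D² + C̃ κ D for all t ∈ [0,t*], where C = ‖P‖_∞‖R''‖_∞ + ‖P'‖_∞‖R'‖_∞ and C̃ = ‖P'‖_∞‖R‖_∞ + ‖P‖_∞‖R'‖_∞. -/

import Mathlib

open Real

lemma bdd_abs_of_periodic {f : ℝ → ℝ} (hf : Continuous f)
    (hper : Function.Periodic f (2 * π)) :
    BddAbove (Set.range fun y => |f y|) := by
  have hc : BddAbove ((fun y => |f y|) '' Set.Icc 0 (2 * π)) :=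
    (isCompact_Icc.image (hf.abs)).bddAbove
  refine hc.mono ?_
  rintro _ ⟨z, rfl⟩
  obtain ⟨y, hy, hfy⟩ := hper.exists_mem_Ico (by positivity) z 0
  exact ⟨y, Set.Ico_subset_Icc_self (by simpa using hy), by simp [hfy]⟩

theorem stmt4 (N : ℕ) (hN : 0 < N) (P R : ℝ → ℝ)
    (hP : ContDiff ℝ 2 P) (hR : ContDiff ℝ 2 R)
    (hPper : Function.Periodic P (2 * π)) (hRper : Function.Periodic R (2 * π))
    (κ γ D tstar : ℝ) (hκ : 0 < κ) (hγ : γ ∈ Set.Ioo (0:ℝ) 1) (hD : 0 < D)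
    (ω : Fin N → ℝ) (hω : ∀ i, ω i ∈ Set.Ioo (1 - γ) (1 + γ))
    (x : Fin N → ℝ → ℝ)
    (hode : ∀ i t, HasDerivAt (x i)
      (ω i - (κ / N) * ∑ j, P (x j t) * R (x i t)) t)
    (hdisp : ∀ t ∈ Set.Icc (0:ℝ) tstar, ∀ i j, |x i t - x j t| < D)
    (C Ct : ℝ)
    (hC : C = (⨆ y : ℝ, |P y|) * (⨆ y : ℝ, |deriv (deriv R) y|)
            + (⨆ y : ℝ, |deriv P y|) * (⨆ y : ℝ, |deriv R y|))
    (hCt : Ct = (⨆ y : ℝ, |deriv P y|) * (⨆ y : ℝ, |R y|)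
            + (⨆ y : ℝ, |P y|) * (⨆ y : ℝ, |deriv R y|)) :
    ∀ i j, ∀ t ∈ Set.Icc (0:ℝ) tstar,
      |deriv (fun u => x i u - x j u) t| ≤ 2 * γ + C * κ * D ^ 2 + Ct * κ * D := by
  intro i j t ht
  set MP : ℝ := ⨆ y : ℝ, |P y| with hMP
  set MR' : ℝ := ⨆ y : ℝ, |deriv R y| with hMR'
  have hPbdd : BddAbove (Set.range fun y => |P y|) :=
    bdd_abs_of_periodic hP.continuous hPper
  have hR'per : Function.Periodic (deriv R) (2 * π) := by
    intro z
    calc deriv R (z + 2 * π) = deriv (fun y => R (y + 2 * π)) z :=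
          (deriv_comp_add_const R (2 * π) z).symm
      _ = deriv R z := by rw [show (fun y => R (y + 2 * π)) = R from funext hRper]
  have hR'bdd : BddAbove (Set.range fun y => |deriv R y|) :=
    bdd_abs_of_periodic (hR.continuous_deriv one_le_two) hR'per
  have hPle : ∀ y, |P y| ≤ MP := fun y => le_ciSup hPbdd y
  have hR'le : ∀ y, |deriv R y| ≤ MR' := fun y => le_ciSup hR'bdd y
  have hMPnn : 0 ≤ MP := Real.iSup_nonneg fun y => abs_nonneg _
  have hMR'nn : 0 ≤ MR' := Real.iSup_nonneg fun y => abs_nonneg _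
  have hCnn : 0 ≤ C := by
    rw [hC]
    have h1 : (0:ℝ) ≤ ⨆ y : ℝ, |deriv (deriv R) y| := Real.iSup_nonneg fun y => abs_nonneg _
    have h2 : (0:ℝ) ≤ ⨆ y : ℝ, |deriv P y| := Real.iSup_nonneg fun y => abs_nonneg _
    positivity
  have hCtge : MP * MR' ≤ Ct := by
    rw [hCt]
    have h2 : (0:ℝ) ≤ ⨆ y : ℝ, |deriv P y| := Real.iSup_nonneg fun y => abs_nonneg _
    have h3 : (0:ℝ) ≤ ⨆ y : ℝ, |R y| := Real.iSup_nonneg fun y => abs_nonneg _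
    nlinarith
  -- compute the derivative
  have hderiv : deriv (fun u => x i u - x j u) t
      = (ω i - ω j) - (κ / N) * ∑ k, P (x k t) * (R (x i t) - R (x j t)) := by
    have h := (show HasDerivAt (fun u => x i u - x j u) _ t from (hode i t).sub (hode j t)).deriv
    rw [h]
    have : ∑ k, P (x k t) * (R (x i t) - R (x j t))
        = (∑ k, P (x k t) * R (x i t)) - ∑ k, P (x k t) * R (x j t) := by
      rw [← Finset.sum_sub_distrib]; simp [mul_sub]
    rw [this]; ring
  rw [hderiv]
  -- bound |ω i - ω j| ≤ 2γ
  have hωi := hω i; have hωj := hω j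
  have hω2 : |ω i - ω j| ≤ 2 * γ := by
    rw [abs_le]
    constructor <;> [linarith [hωi.1, hωj.2]; linarith [hωi.2, hωj.1]]
  -- bound |R xi - R xj| ≤ MR' * D
  have hRdiff : |R (x i t) - R (x j t)| ≤ MR' * D := by
    have hlip : |R (x i t) - R (x j t)| ≤ MR' * |x i t - x j t| := by
      have := Convex.norm_image_sub_le_of_norm_deriv_le
        (f := R) (s := Set.univ) (C := MR')
        (fun y _ => (hR.differentiable two_ne_zero).differentiableAt)
        (fun y _ => hR'le y) convex_univ (Set.mem_univ (x j t)) (Set.mem_univ (x i t))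
      simpa [Real.norm_eq_abs] using this
    calc |R (x i t) - R (x j t)| ≤ MR' * |x i t - x j t| := hlip
      _ ≤ MR' * D := by
          exact mul_le_mul_of_nonneg_left (le_of_lt (hdisp t ht i j)) hMR'nn
  -- bound the sum
  have hsum : |∑ k, P (x k t) * (R (x i t) - R (x j t))| ≤ N * (MP * (MR' * D)) := by
    calc |∑ k, P (x k t) * (R (x i t) - R (x j t))|
        ≤ ∑ k, |P (x k t) * (R (x i t) - R (x j t))| := Finset.abs_sum_le_sum_abs _ _
      _ ≤ ∑ _k : Fin N, MP * (MR' * D) := by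
          refine Finset.sum_le_sum fun k _ => ?_
          rw [abs_mul]
          exact mul_le_mul (hPle _) hRdiff (abs_nonneg _) hMPnn
      _ = N * (MP * (MR' * D)) := by simp [Finset.sum_const, mul_comm]
  have hNpos : (0:ℝ) < N := by exact_mod_cast hN
  have hterm : |(κ / N) * ∑ k, P (x k t) * (R (x i t) - R (x j t))| ≤ κ * (MP * (MR' * D)) := by
    rw [abs_mul]
    have h1 : |κ / (N:ℝ)| = κ / N := abs_of_pos (div_pos hκ hNpos)
    rw [h1]
    calc κ / N * |∑ k, P (x k t) * (R (x i t) - R (x j t))|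
        ≤ κ / N * (N * (MP * (MR' * D))) :=
          mul_le_mul_of_nonneg_left hsum (le_of_lt (div_pos hκ hNpos))
      _ = κ * (MP * (MR' * D)) := by field_simp
  calc |(ω i - ω j) - (κ / N) * ∑ k, P (x k t) * (R (x i t) - R (x j t))|
      ≤ |ω i - ω j| + |(κ / N) * ∑ k, P (x k t) * (R (x i t) - R (x j t))| := abs_sub _ _
    _ ≤ 2 * γ + κ * (MP * (MR' * D)) := add_le_add hω2 hterm
    _ ≤ 2 * γ + C * κ * D ^ 2 + Ct * κ * D := by
        have hA : κ * (MP * (MR' * D)) ≤ Ct * κ * D := by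
          nlinarith [mul_le_mul_of_nonneg_right (mul_le_mul_of_nonneg_left hCtge hκ.le) hD.le]
        have hB : (0:ℝ) ≤ C * κ * D ^ 2 := by positivity
        linarith
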